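/- The Wasserstein-2 distance between two Gaussian measures on ℝ with means μ₁, μ₂ and standard deviations σ₁, σ₂ ≥ 0 equals √((μ₁ − μ₂)² + (σ₁ − σ₂)²). -/

import Mathlib

open MeasureTheory ProbabilityTheory ENNReal NNReal

section aux
open Real Set

lemma phi_eq : gaussianPDFReal 0 1 = fun x : ℝ => (√(2*π))⁻¹ * rexp (-(1/2) * x^2) := by
  funext x
  simp only [gaussianPDFReal, NNReal.coe_one, mul_one, sub_zero]
  ring_nf

lemma M1 : Integrable (fun x : ℝ => gaussianPDFReal 0 1 x * x) := by
  rw [phi_eq]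
  simp_rw [mul_assoc, mul_comm (rexp _)]
  exact (integrable_mul_exp_neg_mul_sq (by norm_num : (0:ℝ) < 1/2)).const_mul _

lemma M2 : ∫ x : ℝ, gaussianPDFReal 0 1 x * x = 0 := by
  set f := fun x : ℝ => gaussianPDFReal 0 1 x * x with hf
  have h1 : ∫ x : ℝ, f (-x) = ∫ x : ℝ, f x :=
    (Measure.measurePreserving_neg (volume : Measure ℝ)).integral_comp
      (Homeomorph.neg ℝ).measurableEmbedding f
  have h2 : ∀ x, f (-x) = - f x := by
    intro x
    simp only [hf, phi_eq]
    ring_nf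
  simp_rw [h2, integral_neg] at h1
  linarith

lemma M3 : Integrable (fun x : ℝ => gaussianPDFReal 0 1 x * x^2) := by
  have h := integrable_rpow_mul_exp_neg_mul_sq (by norm_num : (0:ℝ) < 1/2) (s := 2) (by norm_num)
  rw [phi_eq]
  refine (h.const_mul ((√(2*π))⁻¹)).congr ?_
  filter_upwards with x
  rw [Real.rpow_two]
  ring

lemma Mint : ∫ x in Ioi (0:ℝ), x^2 * rexp (-(1/2) * x^2) = (1/2:ℝ) ^ (-(3:ℝ)/2) * (1/2) * √π / 2 := by
  have h := integral_rpow_mul_exp_neg_mul_rpow (p := 2) (q := 2) (b := 1/2) (by norm_num)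
    (by norm_num) (by norm_num)
  simp_rw [Real.rpow_two] at h
  rw [show ((2:ℝ)+1)/2 = 1/2 + 1 by norm_num, Real.Gamma_add_one (by norm_num),
    Real.Gamma_one_half_eq] at h
  rw [h]; ring_nf

lemma M4 : ∫ x : ℝ, gaussianPDFReal 0 1 x * x^2 = 1 := by
  rw [phi_eq]
  simp_rw [mul_assoc, mul_comm (rexp _), integral_const_mul]
  have habs : ∫ x : ℝ, x^2 * rexp (-(1/2) * x^2)
      = 2 * ∫ x in Ioi (0:ℝ), x^2 * rexp (-(1/2) * x^2) := by
    rw [← integral_comp_abs (f := fun x => x^2 * rexp (-(1/2) * x^2))]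
    congr 1; funext x; rw [sq_abs]
  rw [habs, Mint]
  have h2 : (1/2:ℝ) ^ (-(3:ℝ)/2) = 2 * √2 := by
    rw [one_div, Real.inv_rpow (by norm_num), ← Real.rpow_neg (by norm_num)]
    norm_num
    rw [show ((3:ℝ)/2) = 1 + 1/2 by norm_num, Real.rpow_add (by norm_num), Real.rpow_one,
      ← Real.sqrt_eq_rpow]
  rw [h2, Real.sqrt_mul (by norm_num)]
  have hs2 : (0:ℝ) < √2 := by positivity
  field_simp

lemma gauss_eq_wd : gaussianReal 0 1
    = volume.withDensity fun x => ((Real.toNNReal (gaussianPDFReal 0 1 x) : ℝ≥0) : ℝ≥0∞) := by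
  rw [gaussianReal_of_var_ne_zero 0 one_ne_zero]
  rfl

lemma phi_meas : Measurable fun x => Real.toNNReal (gaussianPDFReal 0 1 x) :=
  (measurable_gaussianPDFReal 0 1).real_toNNReal

lemma smul_eq_phi (f : ℝ → ℝ) :
    (fun x => Real.toNNReal (gaussianPDFReal 0 1 x) • f x)
      = fun x => gaussianPDFReal 0 1 x * f x := by
  funext x
  rw [NNReal.smul_def, smul_eq_mul, Real.coe_toNNReal _ (gaussianPDFReal_nonneg _ _ _)]

lemma int_gauss_iff (f : ℝ → ℝ) : Integrable f (gaussianReal 0 1)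
    ↔ Integrable (fun x => gaussianPDFReal 0 1 x * f x) := by
  rw [gauss_eq_wd, integrable_withDensity_iff_integrable_smul phi_meas, smul_eq_phi]

lemma integral_gauss (f : ℝ → ℝ) :
    ∫ x, f x ∂(gaussianReal 0 1) = ∫ x, gaussianPDFReal 0 1 x * f x := by
  rw [gauss_eq_wd, integral_withDensity_eq_integral_smul phi_meas, smul_eq_phi]

lemma G1 : Integrable (fun x : ℝ => x) (gaussianReal 0 1) := (int_gauss_iff _).mpr M1
lemma G2 : ∫ x, x ∂(gaussianReal 0 1) = 0 := by rw [integral_gauss]; exact M2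
lemma G3 : Integrable (fun x : ℝ => x^2) (gaussianReal 0 1) := (int_gauss_iff _).mpr M3
lemma G4 : ∫ x, x^2 ∂(gaussianReal 0 1) = 1 := by rw [integral_gauss]; exact M4
lemma G5 : MemLp (fun x : ℝ => x) 2 (gaussianReal 0 1) :=
  (memLp_two_iff_integrable_sq measurable_id.aestronglyMeasurable).mpr G3

lemma meas_affine (a b : ℝ) : Measurable fun x : ℝ => a * x + b := by fun_prop

lemma gauss_map (μ : ℝ) (σ : ℝ≥0) :
    gaussianReal μ (σ^2) = (gaussianReal 0 1).map (fun x => (σ:ℝ) * x + μ) := by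
  have h1 : (gaussianReal 0 1).map ((σ:ℝ) * ·) = gaussianReal 0 (σ^2) := by
    rw [gaussianReal_map_const_mul]
    congr 1
    · simp
    · ext; simp
  have h2 : (gaussianReal 0 (σ^2)).map (· + μ) = gaussianReal μ (σ^2) := by
    rw [gaussianReal_map_add_const]; rw [zero_add]
  have hmm : Measurable fun x : ℝ => x + μ := by fun_prop
  have hms : Measurable fun x : ℝ => (σ:ℝ) * x := by fun_prop
  rw [← h2, ← h1, Measure.map_map hmm hms]
  rfl

lemma gauss_memLp (μ : ℝ) (σ : ℝ≥0) : MemLp (fun x : ℝ => x) 2 (gaussianReal μ (σ^2)) := by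
  rw [gauss_map]
  refine (memLp_map_measure_iff measurable_id.aestronglyMeasurable
    (meas_affine _ _).aemeasurable).mpr ?_
  exact ((G5.const_mul (σ:ℝ)).add (memLp_const μ) : )

lemma gauss_mean (μ : ℝ) (σ : ℝ≥0) : ∫ x, x ∂(gaussianReal μ (σ^2)) = μ := by
  rw [gauss_map, integral_map (meas_affine _ _).aemeasurable
    (f := fun x : ℝ => x) (show Measurable fun x:ℝ => x by fun_prop).aestronglyMeasurable]
  rw [integral_add (G1.const_mul _) (integrable_const μ), integral_const_mul, G2,
    integral_const, probReal_univ]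
  simp

lemma gauss_var (μ : ℝ) (σ : ℝ≥0) : ∫ x, (x - μ)^2 ∂(gaussianReal μ (σ^2)) = (σ:ℝ)^2 := by
  rw [gauss_map, integral_map (meas_affine _ _).aemeasurable
    (f := fun x : ℝ => (x - μ)^2) (show Measurable fun x:ℝ => (x-μ)^2 by fun_prop).aestronglyMeasurable]
  have : (fun x => ((σ:ℝ) * x + μ - μ)^2) = fun x => (σ:ℝ)^2 * x^2 := by
    funext x; ring
  simp_rw [this]
  rw [integral_const_mul, G4, mul_one]

lemma integral_affine_sq' (a b : ℝ) :
    ∫ x, (a*x+b)^2 ∂(gaussianReal 0 1) = a^2 + b^2 := by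
  have i1 : Integrable (fun x : ℝ => a^2 * x^2) (gaussianReal 0 1) := G3.const_mul _
  have i2 : Integrable (fun x : ℝ => 2*a*b * x) (gaussianReal 0 1) := G1.const_mul _
  have i3 : Integrable (fun x : ℝ => 2*a*b * x + b^2) (gaussianReal 0 1) := by
    exact i2.add (integrable_const _)
  have : (fun x : ℝ => (a*x+b)^2) = fun x => a^2 * x^2 + (2*a*b * x + b^2) := by
    funext x; ring
  rw [this, integral_add i1 i3, integral_add i2 (integrable_const _), integral_const_mul,
    integral_const_mul, G2, G4, integral_const, probReal_univ]
  simp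

end aux

/-- The squared Wasserstein-2 cost between two measures on `ℝ`, as an infimum of the
expected squared displacement over all couplings. -/
noncomputable def W2sq (P Q : Measure ℝ) : ℝ≥0∞ :=
  ⨅ (π : Measure (ℝ × ℝ)) (_ : π.map Prod.fst = P) (_ : π.map Prod.snd = Q),
    ∫⁻ p, ENNReal.ofReal ((p.1 - p.2) ^ 2) ∂π

lemma int_affine_sq (a b : ℝ) :
    Integrable (fun x => (a*x+b)^2) (gaussianReal 0 1) := by
  have : (fun x : ℝ => (a*x+b)^2) = fun x => a^2 * x^2 + ((2*a*b) * x + b^2) := by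
    funext x; ring
  rw [this]
  exact (G3.const_mul _).add ((G1.const_mul _).add (integrable_const _))

lemma W2sq_le (μ₁ μ₂ : ℝ) (σ₁ σ₂ : ℝ≥0) :
    W2sq (gaussianReal μ₁ (σ₁ ^ 2)) (gaussianReal μ₂ (σ₂ ^ 2))
      ≤ ENNReal.ofReal ((μ₁ - μ₂) ^ 2 + ((σ₁ : ℝ) - (σ₂ : ℝ)) ^ 2) := by
  set g := gaussianReal 0 1
  have hT : Measurable fun x : ℝ => ((σ₁:ℝ) * x + μ₁, (σ₂:ℝ) * x + μ₂) :=
    (meas_affine _ _).prodMk (meas_affine _ _)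
  set π₀ := g.map (fun x : ℝ => ((σ₁:ℝ) * x + μ₁, (σ₂:ℝ) * x + μ₂)) with hπ₀
  have hfst : π₀.map Prod.fst = gaussianReal μ₁ (σ₁ ^ 2) := by
    rw [hπ₀, Measure.map_map measurable_fst hT, gauss_map μ₁ σ₁]; rfl
  have hsnd : π₀.map Prod.snd = gaussianReal μ₂ (σ₂ ^ 2) := by
    rw [hπ₀, Measure.map_map measurable_snd hT, gauss_map μ₂ σ₂]; rfl
  have hval : ∫⁻ p, ENNReal.ofReal ((p.1 - p.2) ^ 2) ∂π₀
      = ENNReal.ofReal ((μ₁ - μ₂) ^ 2 + ((σ₁ : ℝ) - (σ₂ : ℝ)) ^ 2) := by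
    rw [hπ₀, lintegral_map (by fun_prop) hT]
    have h1 : (fun x : ℝ => ENNReal.ofReal (((σ₁:ℝ) * x + μ₁ - ((σ₂:ℝ) * x + μ₂)) ^ 2))
        = fun x => ENNReal.ofReal ((((σ₁:ℝ) - σ₂) * x + (μ₁ - μ₂)) ^ 2) := by
      funext x; congr 1; ring
    rw [h1, ← ofReal_integral_eq_lintegral_ofReal (int_affine_sq _ _)
      (Filter.Eventually.of_forall fun x => sq_nonneg _), integral_affine_sq']
    rw [add_comm]
  refine iInf_le_of_le π₀ ?_
  rw [iInf_pos hfst, iInf_pos hsnd, hval]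

lemma key_ineq {s t : ℝ} (hs : 0 < s) (ht : 0 < t) (u v : ℝ) :
    (1 - t/s) * u^2 + (1 - s/t) * v^2 ≤ (u - v)^2 := by
  rw [← sub_nonneg]
  have h : (u-v)^2 - ((1 - t/s) * u^2 + (1 - s/t) * v^2) = (t*u - s*v)^2 / (s*t) := by
    field_simp
    ring
  rw [h]
  positivity

lemma W2sq_ge (μ₁ μ₂ : ℝ) (σ₁ σ₂ : ℝ≥0) :
    ENNReal.ofReal ((μ₁ - μ₂) ^ 2 + ((σ₁ : ℝ) - (σ₂ : ℝ)) ^ 2)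
      ≤ W2sq (gaussianReal μ₁ (σ₁ ^ 2)) (gaussianReal μ₂ (σ₂ ^ 2)) := by
  refine le_iInf fun π => le_iInf fun h1 => le_iInf fun h2 => ?_
  have hprob : IsProbabilityMeasure π := by
    constructor
    rw [← Set.preimage_univ (f := @Prod.fst ℝ ℝ),
      ← Measure.map_apply measurable_fst MeasurableSet.univ, h1, measure_univ]
  -- second-moment facts transferred to π
  have hX : MemLp (fun p : ℝ × ℝ => p.1) 2 π := by
    have h := gauss_memLp μ₁ σ₁
    rw [← h1] at h
    exact (memLp_map_measure_iff (show Measurable fun x : ℝ => x by fun_prop).aestronglyMeasurable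
      measurable_fst.aemeasurable).mp h
  have hY : MemLp (fun p : ℝ × ℝ => p.2) 2 π := by
    have h := gauss_memLp μ₂ σ₂
    rw [← h2] at h
    exact (memLp_map_measure_iff (show Measurable fun x : ℝ => x by fun_prop).aestronglyMeasurable
      measurable_snd.aemeasurable).mp h
  have hXi : Integrable (fun p : ℝ × ℝ => p.1) π := hX.integrable one_le_two
  have hYi : Integrable (fun p : ℝ × ℝ => p.2) π := hY.integrable one_le_two
  have hmean1 : ∫ p, p.1 ∂π = μ₁ := by
    have h := gauss_mean μ₁ σ₁
    rwa [← h1, integral_map measurable_fst.aemeasurable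
      (show Measurable fun x : ℝ => x by fun_prop).aestronglyMeasurable] at h
  have hmean2 : ∫ p, p.2 ∂π = μ₂ := by
    have h := gauss_mean μ₂ σ₂
    rwa [← h2, integral_map measurable_snd.aemeasurable
      (show Measurable fun x : ℝ => x by fun_prop).aestronglyMeasurable] at h
  have hvar1 : ∫ p, (p.1 - μ₁)^2 ∂π = (σ₁:ℝ)^2 := by
    have h := gauss_var μ₁ σ₁
    rwa [← h1, integral_map measurable_fst.aemeasurable
      (show Measurable fun x : ℝ => (x - μ₁)^2 by fun_prop).aestronglyMeasurable] at h
  have hvar2 : ∫ p, (p.2 - μ₂)^2 ∂π = (σ₂:ℝ)^2 := by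
    have h := gauss_var μ₂ σ₂
    rwa [← h2, integral_map measurable_snd.aemeasurable
      (show Measurable fun x : ℝ => (x - μ₂)^2 by fun_prop).aestronglyMeasurable] at h
  have hu : MemLp (fun p : ℝ × ℝ => p.1 - μ₁) 2 π := by exact hX.sub (memLp_const μ₁)
  have hv : MemLp (fun p : ℝ × ℝ => p.2 - μ₂) 2 π := by exact hY.sub (memLp_const μ₂)
  have hu2 : Integrable (fun p : ℝ × ℝ => (p.1 - μ₁)^2) π := by exact hu.integrable_sq
  have hv2 : Integrable (fun p : ℝ × ℝ => (p.2 - μ₂)^2) π := by exact hv.integrable_sq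
  have hw : MemLp (fun p : ℝ × ℝ => (p.1 - μ₁) - (p.2 - μ₂)) 2 π := by exact hu.sub hv
  have hw2 : Integrable (fun p : ℝ × ℝ => ((p.1 - μ₁) - (p.2 - μ₂))^2) π := by
    exact hw.integrable_sq
  have hwi : Integrable (fun p : ℝ × ℝ => (p.1 - μ₁) - (p.2 - μ₂)) π := by
    exact (hXi.sub (integrable_const μ₁)).sub (hYi.sub (integrable_const μ₂))
  have hwint : ∫ p, ((p.1 - μ₁) - (p.2 - μ₂)) ∂π = 0 := by
    rw [integral_sub (by exact hXi.sub (integrable_const μ₁))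
      (by exact hYi.sub (integrable_const μ₂)),
      integral_sub hXi (integrable_const μ₁), integral_sub hYi (integrable_const μ₂),
      integral_const, integral_const, probReal_univ, hmean1, hmean2]
    simp
  -- central bound
  have hcen : ((σ₁:ℝ) - σ₂)^2 ≤ ∫ p, ((p.1 - μ₁) - (p.2 - μ₂))^2 ∂π := by
    by_cases hσ1 : σ₁ = 0
    · have h0 : (fun p : ℝ × ℝ => (p.1 - μ₁)^2) =ᵐ[π] 0 := by
        refine (integral_eq_zero_iff_of_nonneg (fun p => sq_nonneg _) hu2).mp ?_
        rw [hvar1, hσ1]; simp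
      have heq : (fun p : ℝ × ℝ => ((p.1 - μ₁) - (p.2 - μ₂))^2)
          =ᵐ[π] fun p => (p.2 - μ₂)^2 := by
        filter_upwards [h0] with p hp
        have : p.1 - μ₁ = 0 := by
          have := pow_eq_zero_iff (n := 2) (by norm_num) |>.mp hp
          exact this
        simp only [this, zero_sub, neg_sq]
      rw [integral_congr_ae heq, hvar2, hσ1]
      simp
    · by_cases hσ2 : σ₂ = 0
      · have h0 : (fun p : ℝ × ℝ => (p.2 - μ₂)^2) =ᵐ[π] 0 := by
          refine (integral_eq_zero_iff_of_nonneg (fun p => sq_nonneg _) hv2).mp ?_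
          rw [hvar2, hσ2]; simp
        have heq : (fun p : ℝ × ℝ => ((p.1 - μ₁) - (p.2 - μ₂))^2)
            =ᵐ[π] fun p => (p.1 - μ₁)^2 := by
          filter_upwards [h0] with p hp
          have : p.2 - μ₂ = 0 := pow_eq_zero_iff (n := 2) (by norm_num) |>.mp hp
          simp only [this, sub_zero]
        rw [integral_congr_ae heq, hvar1, hσ2]
        simp
      · have hs : (0:ℝ) < σ₁ := by positivity
        have ht : (0:ℝ) < σ₂ := by positivity
        have hLi : Integrable (fun p : ℝ × ℝ =>
            (1 - (σ₂:ℝ)/σ₁) * (p.1 - μ₁)^2 + (1 - (σ₁:ℝ)/σ₂) * (p.2 - μ₂)^2) π := by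
          exact (hu2.const_mul _).add (hv2.const_mul _)
        have hle := integral_mono hLi hw2 (fun p => key_ineq hs ht (p.1 - μ₁) (p.2 - μ₂))
        rw [integral_add (by exact hu2.const_mul _) (by exact hv2.const_mul _),
          integral_const_mul, integral_const_mul, hvar1, hvar2] at hle
        refine le_trans (le_of_eq ?_) hle
        field_simp
        ring
  -- decompose the full second moment
  have hdecomp : ∫ p, (p.1 - p.2)^2 ∂π
      = (∫ p, ((p.1 - μ₁) - (p.2 - μ₂))^2 ∂π) + (μ₁ - μ₂)^2 := by
    have hfun : (fun p : ℝ × ℝ => (p.1 - p.2)^2)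
        = fun p => ((p.1 - μ₁) - (p.2 - μ₂))^2
            + ((2*(μ₁ - μ₂)) * ((p.1 - μ₁) - (p.2 - μ₂)) + (μ₁ - μ₂)^2) := by
      funext p; ring
    have hBi : Integrable (fun p : ℝ × ℝ =>
        (2*(μ₁ - μ₂)) * ((p.1 - μ₁) - (p.2 - μ₂)) + (μ₁ - μ₂)^2) π := by
      exact (hwi.const_mul _).add (integrable_const _)
    rw [hfun, integral_add hw2 hBi, integral_add (by exact hwi.const_mul _) (integrable_const _),
      integral_const_mul, hwint, integral_const, probReal_univ]
    simp
  have hsq : Integrable (fun p : ℝ × ℝ => (p.1 - p.2)^2) π := by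
    exact (hX.sub hY).integrable_sq
  rw [← ofReal_integral_eq_lintegral_ofReal hsq (Filter.Eventually.of_forall fun p => sq_nonneg _)]
  refine ENNReal.ofReal_le_ofReal ?_
  rw [hdecomp]
  linarith

/-- The Wasserstein-2 distance between two univariate Gaussians `N(μ₁, σ₁²)` and
`N(μ₂, σ₂²)` equals `√((μ₁ − μ₂)² + (σ₁ − σ₂)²)`. -/
theorem W2_gaussian_gaussian (μ₁ μ₂ : ℝ) (σ₁ σ₂ : ℝ≥0) :
    Real.sqrt (W2sq (gaussianReal μ₁ (σ₁ ^ 2)) (gaussianReal μ₂ (σ₂ ^ 2))).toReal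
      = Real.sqrt ((μ₁ - μ₂) ^ 2 + ((σ₁ : ℝ) - (σ₂ : ℝ)) ^ 2) := by
  have h : W2sq (gaussianReal μ₁ (σ₁ ^ 2)) (gaussianReal μ₂ (σ₂ ^ 2))
      = ENNReal.ofReal ((μ₁ - μ₂) ^ 2 + ((σ₁ : ℝ) - (σ₂ : ℝ)) ^ 2) :=
    le_antisymm (W2sq_le μ₁ μ₂ σ₁ σ₂) (W2sq_ge μ₁ μ₂ σ₁ σ₂)
  rw [h, ENNReal.toReal_ofReal (by positivity)]
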